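/- arXiv:2209.13054 — 5 statements merged into one kernel-verified Lean document; each statement's English description precedes it below -/
import Mathlib

section
/- Let K : [0,T] → ℝ be continuous and H-Hölder continuous for some H ∈ (0,1), i.e. |K(t) - K(s)| ≤ C|t-s|^H for all s,t ∈ [0,T]. Then there exists a constant C' > 0 such that for all 0 ≤ s ≤ t ≤ T, ∫₀ᵗ (K(t-u)·1_{u≤t} - K(s-u)·1_{u≤s})² du ≤ C'·|t-s|^{2·min(H,1/2)}. -/
open MeasureTheory Set

/-- Hölder continuous difference kernel: square-increment estimate with exponent
`2 * min H (1/2)`. -/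
theorem stmt_0 (T H C : ℝ) (hT : 0 < T) (hH : H ∈ Set.Ioo (0:ℝ) 1) (hC : 0 < C)
    (K : ℝ → ℝ) (hKcont : ContinuousOn K (Set.Icc 0 T))
    (hK : ∀ s ∈ Set.Icc (0:ℝ) T, ∀ t ∈ Set.Icc (0:ℝ) T, |K t - K s| ≤ C * |t - s| ^ H) :
    ∃ C' > (0:ℝ), ∀ s t : ℝ, 0 ≤ s → s ≤ t → t ≤ T →
      (∫ u in Set.Ioc (0:ℝ) t,
        ((if u ≤ t then K (t - u) else 0) - (if u ≤ s then K (s - u) else 0)) ^ 2)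
        ≤ C' * |t - s| ^ (2 * min H (1/2)) := by
  obtain ⟨hH0, hH1⟩ := hH
  set α : ℝ := 2 * min H (1/2) with hαdef
  have hα0 : 0 < α := by
    have : 0 < min H (1/2) := lt_min hH0 (by norm_num)
    positivity
  have hα2H : α ≤ 2 * H := by
    have := min_le_left H (1/2); simp only [hαdef]; linarith
  have hα1 : α ≤ 1 := by
    have := min_le_right H (1/2); simp only [hαdef]; linarith
  set M : ℝ := |K 0| + C * T ^ H with hMdef
  have hTH : (0:ℝ) ≤ T ^ H := Real.rpow_nonneg hT.le H
  have hMK : ∀ x ∈ Icc (0:ℝ) T, |K x| ≤ M := by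
    intro x hx
    have h0 : (0:ℝ) ∈ Icc (0:ℝ) T := ⟨le_refl 0, hT.le⟩
    have h1 := hK 0 h0 x hx
    have hxT : |x - 0| ^ H ≤ T ^ H := by
      rw [sub_zero, abs_of_nonneg hx.1]
      exact Real.rpow_le_rpow hx.1 hx.2 hH0.le
    have h2 : |K x| ≤ |K 0| + |K x - K 0| := by
      calc |K x| = |K 0 + (K x - K 0)| := by ring_nf
        _ ≤ |K 0| + |K x - K 0| := abs_add_le _ _
    have h3 : C * |x - 0| ^ H ≤ C * T ^ H :=
      mul_le_mul_of_nonneg_left hxT hC.le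
    linarith
  -- auxiliary power comparison
  have aux : ∀ x β : ℝ, 0 ≤ x → x ≤ T → α ≤ β → x ^ β ≤ T ^ (β - α) * x ^ α := by
    intro x β hx hxT hβ
    have h1 : x ^ β = x ^ (β - α) * x ^ α := by
      rw [← Real.rpow_add_of_nonneg hx (by linarith) hα0.le]
      ring_nf
    rw [h1]
    exact mul_le_mul_of_nonneg_right (Real.rpow_le_rpow hx hxT (by linarith))
      (Real.rpow_nonneg hx α)
  refine ⟨C ^ 2 * T ^ (2 * H - α) * T + M ^ 2 * T ^ (1 - α), by positivity, ?_⟩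
  intro s t hs hst htT
  have hx0 : 0 ≤ t - s := by linarith
  have hxT : t - s ≤ T := by linarith
  set f : ℝ → ℝ := fun u =>
    ((if u ≤ t then K (t - u) else 0) - (if u ≤ s then K (s - u) else 0)) ^ 2 with hfdef
  -- continuity pieces
  have c1 : ContinuousOn (fun u => (K (t - u) - K (s - u)) ^ 2) (Icc 0 s) := by
    have ht' : ContinuousOn (fun u => K (t - u)) (Icc 0 s) := by
      apply hKcont.comp (continuous_const.sub continuous_id).continuousOn
      intro u hu
      rw [mem_Icc] at hu ⊢
      constructor <;> simp only [Pi.sub_apply, id] <;> linarith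
    have hs' : ContinuousOn (fun u => K (s - u)) (Icc 0 s) := by
      apply hKcont.comp (continuous_const.sub continuous_id).continuousOn
      intro u hu
      rw [mem_Icc] at hu ⊢
      constructor <;> simp only [Pi.sub_apply, id] <;> linarith
    exact (ht'.sub hs').pow 2
  have c2 : ContinuousOn (fun u => (K (t - u)) ^ 2) (Icc s t) := by
    have ht' : ContinuousOn (fun u => K (t - u)) (Icc s t) := by
      apply hKcont.comp (continuous_const.sub continuous_id).continuousOn
      intro u hu
      rw [mem_Icc] at hu ⊢
      constructor <;> simp only [Pi.sub_apply, id] <;> linarith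
    exact ht'.pow 2
  have eq1 : EqOn (fun u => (K (t - u) - K (s - u)) ^ 2) f (Ioc 0 s) := by
    intro u hu
    rw [mem_Ioc] at hu
    simp only [hfdef, if_pos (hu.2.trans hst), if_pos hu.2]
  have eq2 : EqOn (fun u => (K (t - u)) ^ 2) f (Ioc s t) := by
    intro u hu
    rw [mem_Ioc] at hu
    simp only [hfdef, if_pos hu.2, if_neg (not_le.2 hu.1), sub_zero]
  have hint1 : IntegrableOn f (Ioc 0 s) volume :=
    ((c1.integrableOn_Icc).mono_set Ioc_subset_Icc_self).congr_fun eq1 measurableSet_Ioc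
  have hint2 : IntegrableOn f (Ioc s t) volume :=
    ((c2.integrableOn_Icc).mono_set Ioc_subset_Icc_self).congr_fun eq2 measurableSet_Ioc
  have hsplit : (∫ u in Ioc (0:ℝ) t, f u) =
      (∫ u in Ioc (0:ℝ) s, f u) + ∫ u in Ioc s t, f u := by
    rw [← Ioc_union_Ioc_eq_Ioc hs hst,
      setIntegral_union (Ioc_disjoint_Ioc_of_le le_rfl) measurableSet_Ioc hint1 hint2]
  have b1 : (∫ u in Ioc (0:ℝ) s, f u) ≤ C ^ 2 * (t - s) ^ (2 * H) * s := by
    have hb : ∀ u ∈ Ioc (0:ℝ) s, f u ≤ C ^ 2 * (t - s) ^ (2 * H) := by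
      intro u hu
      rw [← eq1 hu]
      have hmem1 : t - u ∈ Icc (0:ℝ) T := by
        rw [mem_Ioc] at hu; constructor <;> linarith
      have hmem2 : s - u ∈ Icc (0:ℝ) T := by
        rw [mem_Ioc] at hu; constructor <;> linarith
      have h1 := hK (s - u) hmem2 (t - u) hmem1
      have h2 : |t - u - (s - u)| = t - s := by
        rw [show t - u - (s - u) = t - s by ring, abs_of_nonneg hx0]
      rw [h2] at h1
      have h3 : (K (t - u) - K (s - u)) ^ 2 ≤ (C * (t - s) ^ H) ^ 2 := by
        rw [← sq_abs]
        exact pow_le_pow_left₀ (abs_nonneg _) h1 2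
      have h4 : (C * (t - s) ^ H) ^ 2 = C ^ 2 * (t - s) ^ (2 * H) := by
        rw [mul_pow, ← Real.rpow_natCast ((t - s) ^ H) 2, ← Real.rpow_mul hx0]
        norm_num [mul_comm]
      calc (fun u => (K (t - u) - K (s - u)) ^ 2) u ≤ (C * (t - s) ^ H) ^ 2 := h3
        _ = C ^ 2 * (t - s) ^ (2 * H) := h4
    calc (∫ u in Ioc (0:ℝ) s, f u)
        ≤ ∫ _u in Ioc (0:ℝ) s, C ^ 2 * (t - s) ^ (2 * H) :=
          setIntegral_mono_on hint1 (integrableOn_const (by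
            rw [Real.volume_Ioc]; exact ENNReal.ofReal_ne_top)) measurableSet_Ioc hb
      _ = C ^ 2 * (t - s) ^ (2 * H) * s := by
          rw [setIntegral_const, Real.volume_real_Ioc, smul_eq_mul,
            max_eq_left (by linarith)]
          ring
  have b2 : (∫ u in Ioc s t, f u) ≤ M ^ 2 * (t - s) := by
    have hb : ∀ u ∈ Ioc s t, f u ≤ M ^ 2 := by
      intro u hu
      rw [← eq2 hu]
      have hmem1 : t - u ∈ Icc (0:ℝ) T := by
        rw [mem_Ioc] at hu; constructor <;> linarith
      have h1 := hMK _ hmem1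
      have : (K (t - u)) ^ 2 ≤ M ^ 2 := by
        rw [← sq_abs]
        exact pow_le_pow_left₀ (abs_nonneg _) h1 2
      exact this
    calc (∫ u in Ioc s t, f u)
        ≤ ∫ _u in Ioc s t, M ^ 2 :=
          setIntegral_mono_on hint2 (integrableOn_const (by
            rw [Real.volume_Ioc]; exact ENNReal.ofReal_ne_top)) measurableSet_Ioc hb
      _ = M ^ 2 * (t - s) := by
          rw [setIntegral_const, Real.volume_real_Ioc, smul_eq_mul,
            max_eq_left hx0]
          ring
  have key1 : (t - s) ^ (2 * H) ≤ T ^ (2 * H - α) * (t - s) ^ α :=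
    aux _ _ hx0 hxT hα2H
  have key2 : t - s ≤ T ^ (1 - α) * (t - s) ^ α := by
    have := aux (t - s) 1 hx0 hxT hα1
    rwa [Real.rpow_one] at this
  have hxα : (0:ℝ) ≤ (t - s) ^ α := Real.rpow_nonneg hx0 α
  have hT1 : (0:ℝ) ≤ T ^ (2 * H - α) := Real.rpow_nonneg hT.le _
  have hsT : s ≤ T := hst.trans htT
  rw [abs_of_nonneg hx0, hsplit]
  have hM2 : (0:ℝ) ≤ M ^ 2 := sq_nonneg M
  nlinarith [mul_le_mul_of_nonneg_right key1 (mul_nonneg (sq_nonneg C) hs),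
    mul_le_mul_of_nonneg_left key2 hM2,
    mul_le_mul_of_nonneg_right hsT (mul_nonneg (mul_nonneg (sq_nonneg C) hT1) hxα)]
end

section
/- Let K : [0,T] → ℝ be H-Hölder continuous with K(0) = 0, for some H ∈ (0,1). Then there exists a constant C > 0 such that for all 0 ≤ s ≤ t ≤ T, ∫₀ᵗ (K(t-u)·1_{u≤t} - K(s-u)·1_{u≤s})² du ≤ C·|t-s|^{2H}. -/
open MeasureTheory Set

/-- Hölder continuous difference kernel with `K 0 = 0`: square-increment estimate
with the improved exponent `2 * H`. -/
theorem stmt_1 (T H C : ℝ) (hT : 0 < T) (hH : H ∈ Set.Ioo (0:ℝ) 1) (hC : 0 < C)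
    (K : ℝ → ℝ) (hK0 : K 0 = 0)
    (hK : ∀ s ∈ Set.Icc (0:ℝ) T, ∀ t ∈ Set.Icc (0:ℝ) T, |K t - K s| ≤ C * |t - s| ^ H) :
    ∃ C' > (0:ℝ), ∀ s t : ℝ, 0 ≤ s → s ≤ t → t ≤ T →
      (∫ u in Set.Ioc (0:ℝ) t,
        ((if u ≤ t then K (t - u) else 0) - (if u ≤ s then K (s - u) else 0)) ^ 2)
        ≤ C' * |t - s| ^ (2 * H) := by
  obtain ⟨hH0, hH1⟩ := hH
  refine ⟨T * C ^ 2, by positivity, fun s t hs hst htT => ?_⟩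
  set f : ℝ → ℝ := fun u =>
    ((if u ≤ t then K (t - u) else 0) - (if u ≤ s then K (s - u) else 0)) ^ 2 with hf
  have hts : (0:ℝ) ≤ t - s := by linarith
  have habs : |t - s| = t - s := abs_of_nonneg hts
  -- pointwise bound
  have hbound : ∀ u ∈ Set.Ioc (0:ℝ) t, ‖f u‖ ≤ C ^ 2 * |t - s| ^ (2 * H) := by
    intro u hu
    obtain ⟨hu0, hut⟩ := hu
    have key : |(if u ≤ t then K (t - u) else 0) - (if u ≤ s then K (s - u) else 0)|
        ≤ C * |t - s| ^ H := by
      rw [if_pos hut]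
      by_cases hus : u ≤ s
      · rw [if_pos hus]
        have h1 : s - u ∈ Set.Icc (0:ℝ) T := ⟨by linarith, by linarith⟩
        have h2 : t - u ∈ Set.Icc (0:ℝ) T := ⟨by linarith, by linarith⟩
        have := hK _ h1 _ h2
        simpa using this
      · rw [if_neg hus, sub_zero]
        push_neg at hus
        have h1 : (0:ℝ) ∈ Set.Icc (0:ℝ) T := ⟨le_refl _, hT.le⟩
        have h2 : t - u ∈ Set.Icc (0:ℝ) T := ⟨by linarith, by linarith⟩
        have := hK _ h1 _ h2
        rw [hK0, sub_zero, sub_zero] at this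
        refine this.trans ?_
        have h3 : |t - u| ≤ |t - s| := by
          rw [habs, abs_of_nonneg (by linarith : (0:ℝ) ≤ t - u)]; linarith
        exact mul_le_mul_of_nonneg_left
          (Real.rpow_le_rpow (abs_nonneg _) h3 hH0.le) hC.le
    have hsq : f u = |(if u ≤ t then K (t - u) else 0) - (if u ≤ s then K (s - u) else 0)| ^ 2 := by
      rw [hf]; simp [sq_abs]
    have hnn : (0:ℝ) ≤ f u := by rw [hf]; positivity
    rw [Real.norm_of_nonneg hnn, hsq]
    calc |(if u ≤ t then K (t - u) else 0) - (if u ≤ s then K (s - u) else 0)| ^ 2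
        ≤ (C * |t - s| ^ H) ^ 2 := by
          apply pow_le_pow_left₀ (abs_nonneg _) key
      _ = C ^ 2 * |t - s| ^ (2 * H) := by
          rw [mul_pow, ← Real.rpow_natCast (|t - s| ^ H) 2, ← Real.rpow_mul (abs_nonneg _)]
          norm_num [mul_comm]
  have hvol : volume (Set.Ioc (0:ℝ) t) < ⊤ := by
    rw [Real.volume_Ioc]; exact ENNReal.ofReal_lt_top
  have := norm_setIntegral_le_of_norm_le_const hvol hbound
  have hInt : ∫ u in Set.Ioc (0:ℝ) t, f u ≤ ‖∫ u in Set.Ioc (0:ℝ) t, f u‖ :=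
    le_abs_self _
  refine (hInt.trans this).trans ?_
  rw [measureReal_def, Real.volume_Ioc, ENNReal.toReal_ofReal (by linarith : (0:ℝ) ≤ t - 0)]
  have h1 : C ^ 2 * |t - s| ^ (2 * H) * (t - 0) ≤ C ^ 2 * |t - s| ^ (2 * H) * T := by
    apply mul_le_mul_of_nonneg_left (by linarith) (by positivity)
  linarith [h1]
end

section
/- Let H ∈ (0,1) and K(t,s) = (t-s)^{H-1/2}/Γ(H+1/2) for 0 ≤ s < t ≤ T. Then there exists a constant C > 0 such that for all 0 ≤ s ≤ t ≤ T, ∫₀ˢ ((t-u)^{H-1/2} - (s-u)^{H-1/2})² du + ∫ₛᵗ (t-u)^{2H-1} du ≤ C·|t-s|^{2H}. -/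
open MeasureTheory Set intervalIntegral
open scoped NNReal

lemma auxInt (r c a b : ℝ) (hab : a ≤ b) (h : -1 < r ∨ (r ≠ -1 ∧ 0 < c - b)) :
    ∫ u in Set.Ioc a b, (c - u) ^ r = ((c-a)^(r+1) - (c-b)^(r+1))/(r+1) := by
  rw [← intervalIntegral.integral_of_le hab,
    intervalIntegral.integral_comp_sub_left (fun x => x ^ r) c]
  apply integral_rpow
  rcases h with h | ⟨h1, h2⟩
  · exact Or.inl h
  · refine Or.inr ⟨h1, ?_⟩
    rw [Set.uIcc_of_le (by linarith)]
    simp only [Set.mem_Icc, not_and, not_le]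
    intro h0; linarith

lemma auxIntg (r c a b : ℝ) (hr : -1 < r) (hab : a ≤ b) :
    IntegrableOn (fun u => (c - u) ^ r) (Set.Ioc a b) := by
  have h := ((intervalIntegral.intervalIntegrable_rpow' (a := c - b) (b := c - a) hr).comp_sub_left c).symm
  simp only [sub_sub_cancel] at h
  rwa [intervalIntegrable_iff_integrableOn_Ioc_of_le hab] at h

lemma rpowSubadd (x y p : ℝ) (hx : 0 ≤ x) (hy : 0 ≤ y) (hp : 0 < p) (hp1 : p ≤ 1) :
    (x + y) ^ p ≤ x ^ p + y ^ p := by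
  have h := NNReal.rpow_add_rpow_le (x.toNNReal) (y.toNNReal) hp hp1
  simp only [NNReal.rpow_one, one_div_one, NNReal.rpow_one] at h
  have h2 := NNReal.rpow_le_rpow h hp.le
  rw [← NNReal.rpow_mul, one_div, inv_mul_cancel₀ hp.ne'] at h2
  simp only [NNReal.rpow_one] at h2
  calc (x + y) ^ p = ((x.toNNReal + y.toNNReal : ℝ≥0) : ℝ) ^ p := by
        rw [NNReal.coe_add, Real.coe_toNNReal _ hx, Real.coe_toNNReal _ hy]
    _ = (((x.toNNReal + y.toNNReal) ^ p : ℝ≥0) : ℝ) := by rw [← NNReal.coe_rpow]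
    _ ≤ (((x.toNNReal ^ p + y.toNNReal ^ p : ℝ≥0)) : ℝ) := by exact_mod_cast h2
    _ = x ^ p + y ^ p := by
        rw [NNReal.coe_add, NNReal.coe_rpow, NNReal.coe_rpow,
          Real.coe_toNNReal _ hx, Real.coe_toNNReal _ hy]

lemma rpowMVT (b δ α : ℝ) (hb : 0 < b) (hδ : 0 ≤ δ) (hα : 0 ≤ α) (hα1 : α ≤ 1) :
    (b + δ) ^ α ≤ b ^ α + α * δ * b ^ (α - 1) := by
  have key : (1 + δ / b) ^ α ≤ 1 + α * (δ / b) :=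
    rpow_one_add_le_one_add_mul_self (by have := div_nonneg hδ hb.le; linarith) hα hα1
  have hb' : b ≠ 0 := hb.ne'
  have e1 : b + δ = b * (1 + δ / b) := by field_simp
  have e2 : (b * (1 + δ/b)) ^ α = b ^ α * (1 + δ/b) ^ α :=
    Real.mul_rpow hb.le (by positivity)
  rw [e1, e2]
  calc b ^ α * (1 + δ/b) ^ α ≤ b ^ α * (1 + α * (δ/b)) := by
        apply mul_le_mul_of_nonneg_left key (Real.rpow_nonneg hb.le α)
    _ = b ^ α + α * δ * (b ^ α / b) := by field_simp
    _ = b ^ α + α * δ * b ^ (α - 1) := by rw [← Real.rpow_sub_one hb']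

set_option maxHeartbeats 1000000 in
/-- Square-increment estimate for the Riemann–Liouville fractional kernel
`K(t,s) = (t-s)^{H-1/2} / Γ(H+1/2)`. -/
theorem stmt_2 (T H : ℝ) (hT : 0 < T) (hH : H ∈ Set.Ioo (0:ℝ) 1) :
    ∃ C > (0:ℝ), ∀ s t : ℝ, 0 ≤ s → s ≤ t → t ≤ T →
      (∫ u in Set.Ioc (0:ℝ) s, ((t - u) ^ (H - 1/2) - (s - u) ^ (H - 1/2)) ^ 2)
        + (∫ u in Set.Ioc s t, (t - u) ^ (2 * H - 1))
        ≤ C * |t - s| ^ (2 * H) := by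
  obtain ⟨hH0, hH1⟩ := hH
  have h2H : (0:ℝ) < 2 * H := by linarith
  have hr1 : (-1:ℝ) < 2 * H - 1 := by linarith
  by_cases hc : H ≤ 1/2
  -- ============ Case H ≤ 1/2 ============
  · refine ⟨1/H, by positivity, ?_⟩
    intro s t hs hst htT
    rcases eq_or_lt_of_le hst with rfl | hlt
    · simp [Real.zero_rpow h2H.ne']
    have hδ : 0 < t - s := by linarith
    -- second integral
    have e2 : ∫ u in Set.Ioc s t, (t - u) ^ (2 * H - 1) = (t-s)^(2*H) / (2*H) := by
      have e := auxInt (2*H-1) t s t hst (Or.inl hr1)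
      rw [show 2*H-1+1 = 2*H by ring, sub_self, Real.zero_rpow h2H.ne', sub_zero] at e
      exact e
    -- first integral
    have hα : H - 1/2 ≤ 0 := by linarith
    have hg1 : IntegrableOn (fun u => (s - u) ^ (2*H-1)) (Set.Ioo 0 s) :=
      (auxIntg (2*H-1) s 0 s hr1 hs).mono_set Set.Ioo_subset_Ioc_self
    have hg2 : IntegrableOn (fun u => (t - u) ^ (2*H-1)) (Set.Ioo 0 s) :=
      (auxIntg (2*H-1) t 0 s hr1 hs).mono_set Set.Ioo_subset_Ioc_self
    have hfmeas : Measurable (fun u => ((t - u) ^ (H - 1/2) - (s - u) ^ (H - 1/2)) ^ 2) := by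
      apply Measurable.pow_const
      exact ((measurable_const.sub measurable_id).pow measurable_const).sub
        ((measurable_const.sub measurable_id).pow measurable_const)
    have hptwise : ∀ u ∈ Set.Ioo (0:ℝ) s,
        ((t - u) ^ (H - 1/2) - (s - u) ^ (H - 1/2)) ^ 2
          ≤ (s - u) ^ (2*H-1) - (t - u) ^ (2*H-1) := by
      intro u hu
      have hsu : 0 < s - u := by linarith [hu.2]
      have htu : 0 < t - u := by linarith [hu.2]
      have hBA : (t - u) ^ (H - 1/2) ≤ (s - u) ^ (H - 1/2) :=
        Real.rpow_le_rpow_of_nonpos hsu (by linarith) hα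
      have hB0 : 0 ≤ (t - u) ^ (H - 1/2) := Real.rpow_nonneg htu.le _
      have eA : (s - u) ^ (H - 1/2) * (s - u) ^ (H - 1/2) = (s - u) ^ (2*H-1) := by
        rw [← Real.rpow_add hsu]; ring_nf
      have eB : (t - u) ^ (H - 1/2) * (t - u) ^ (H - 1/2) = (t - u) ^ (2*H-1) := by
        rw [← Real.rpow_add htu]; ring_nf
      nlinarith [mul_nonneg hB0 (sub_nonneg.mpr hBA)]
    have hfint : IntegrableOn (fun u => ((t - u) ^ (H - 1/2) - (s - u) ^ (H - 1/2)) ^ 2)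
        (Set.Ioo 0 s) := by
      apply Integrable.mono hg1 (hfmeas.aestronglyMeasurable.restrict)
      rw [ae_restrict_iff' measurableSet_Ioo]
      filter_upwards with u hu
      have h1 := hptwise u hu
      have hsu : 0 < s - u := by linarith [hu.2]
      have htu0 : 0 ≤ (t - u) ^ (2*H-1) := Real.rpow_nonneg (by linarith [hu.2]) _
      rw [Real.norm_eq_abs, Real.norm_eq_abs, abs_of_nonneg (sq_nonneg _),
        abs_of_nonneg (Real.rpow_nonneg hsu.le _)]
      linarith
    have key1 : (∫ u in Set.Ioc (0:ℝ) s, ((t - u) ^ (H - 1/2) - (s - u) ^ (H - 1/2)) ^ 2)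
        ≤ (t-s)^(2*H) / (2*H) := by
      rw [MeasureTheory.integral_Ioc_eq_integral_Ioo]
      have step : (∫ u in Set.Ioo (0:ℝ) s, ((t - u) ^ (H - 1/2) - (s - u) ^ (H - 1/2)) ^ 2)
          ≤ ∫ u in Set.Ioo (0:ℝ) s, ((s - u) ^ (2*H-1) - (t - u) ^ (2*H-1)) :=
        setIntegral_mono_on hfint (hg1.sub hg2) measurableSet_Ioo hptwise
      have esub : (∫ u in Set.Ioo (0:ℝ) s, ((s - u) ^ (2*H-1) - (t - u) ^ (2*H-1)))
          = (∫ u in Set.Ioo (0:ℝ) s, (s - u) ^ (2*H-1))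
            - ∫ u in Set.Ioo (0:ℝ) s, (t - u) ^ (2*H-1) := integral_sub hg1 hg2
      have ev1 : (∫ u in Set.Ioo (0:ℝ) s, (s - u) ^ (2*H-1)) = s^(2*H)/(2*H) := by
        rw [← MeasureTheory.integral_Ioc_eq_integral_Ioo, auxInt (2*H-1) s 0 s hs (Or.inl hr1),
          show 2*H-1+1 = 2*H by ring, sub_self, Real.zero_rpow h2H.ne', sub_zero, sub_zero]
      have ev2 : (∫ u in Set.Ioo (0:ℝ) s, (t - u) ^ (2*H-1)) = (t^(2*H) - (t-s)^(2*H))/(2*H) := by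
        rw [← MeasureTheory.integral_Ioc_eq_integral_Ioo, auxInt (2*H-1) t 0 s hs (Or.inl hr1),
          show 2*H-1+1 = 2*H by ring, sub_zero]
      have hst2H : s^(2*H) ≤ t^(2*H) := Real.rpow_le_rpow hs hst h2H.le
      rw [esub, ev1, ev2] at step
      have : s^(2*H)/(2*H) - (t^(2*H) - (t-s)^(2*H))/(2*H) ≤ (t-s)^(2*H)/(2*H) := by
        rw [div_sub_div_same, div_le_div_iff_of_pos_right h2H]
        linarith
      linarith
    rw [e2, abs_of_nonneg (by linarith : (0:ℝ) ≤ t - s)]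
    have hpos : 0 < (t-s)^(2*H) := Real.rpow_pos_of_pos hδ _
    rw [show (1/H) * (t-s)^(2*H) = 2 * ((t-s)^(2*H)/(2*H)) by field_simp]
    linarith
  -- ============ Case H > 1/2 ============
  · push_neg at hc
    have hα : 0 < H - 1/2 := by linarith
    have hα1 : H - 1/2 ≤ 1 := by linarith
    have h22H : (0:ℝ) < 2 - 2*H := by linarith
    refine ⟨1/(2*H) + 1 + 1/(2-2*H), by positivity, ?_⟩
    intro s t hs hst htT
    rcases eq_or_lt_of_le hst with rfl | hlt
    · simp [Real.zero_rpow h2H.ne']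
    have hδ : 0 < t - s := by linarith
    set δ := t - s with hδdef
    -- second integral
    have e2 : ∫ u in Set.Ioc s t, (t - u) ^ (2 * H - 1) = δ^(2*H) / (2*H) := by
      have e := auxInt (2*H-1) t s t hst (Or.inl hr1)
      rw [show 2*H-1+1 = 2*H by ring, sub_self, Real.zero_rpow h2H.ne', sub_zero] at e
      exact e
    -- continuity of integrand on Icc 0 s
    have hcont : ContinuousOn (fun u => ((t - u) ^ (H - 1/2) - (s - u) ^ (H - 1/2)) ^ 2)
        (Set.Icc 0 s) := by
      apply ContinuousOn.pow
      apply ContinuousOn.sub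
      · exact (continuousOn_const.sub continuousOn_id).rpow_const
          (fun x hx => Or.inr hα.le)
      · exact (continuousOn_const.sub continuousOn_id).rpow_const
          (fun x hx => Or.inr hα.le)
    have hfint : IntegrableOn (fun u => ((t - u) ^ (H - 1/2) - (s - u) ^ (H - 1/2)) ^ 2)
        (Set.Ioc 0 s) := (hcont.integrableOn_Icc).mono_set Set.Ioc_subset_Icc_self
    set m := max (s - δ) 0 with hmdef
    have hm0 : (0:ℝ) ≤ m := le_max_right _ _
    have hms : m ≤ s := max_le (by linarith) hs
    -- pointwise bound on middle piece
    have hmid_pt : ∀ u ∈ Set.Ioc m s,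
        ((t - u) ^ (H - 1/2) - (s - u) ^ (H - 1/2)) ^ 2 ≤ δ^(2*H-1) := by
      intro u hu
      have hsu : 0 ≤ s - u := by linarith [hu.2]
      have hAB : (s - u) ^ (H - 1/2) ≤ (t - u) ^ (H - 1/2) :=
        Real.rpow_le_rpow hsu (by linarith) hα.le
      have hsub : (t - u) ^ (H - 1/2) ≤ (s - u) ^ (H - 1/2) + δ^(H - 1/2) := by
        have := rpowSubadd (s - u) δ (H - 1/2) hsu hδ.le hα hα1
        calc (t - u) ^ (H - 1/2) = ((s - u) + δ) ^ (H - 1/2) := by congr 1; linarith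
          _ ≤ (s - u) ^ (H - 1/2) + δ^(H - 1/2) := this
      have hb : ((t - u) ^ (H - 1/2) - (s - u) ^ (H - 1/2)) ^ 2 ≤ (δ^(H - 1/2))^2 := by
        apply pow_le_pow_left₀ (sub_nonneg.mpr hAB) (by linarith)
      have : (δ^(H - 1/2))^2 = δ^(2*H-1) := by
        rw [sq, ← Real.rpow_add hδ]; ring_nf
      linarith
    have hmid : (∫ u in Set.Ioc m s, ((t - u) ^ (H - 1/2) - (s - u) ^ (H - 1/2)) ^ 2)
        ≤ δ^(2*H) := by
      have hsubint : IntegrableOn (fun u => ((t - u) ^ (H - 1/2) - (s - u) ^ (H - 1/2)) ^ 2)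
          (Set.Ioc m s) := hfint.mono_set (Set.Ioc_subset_Ioc_left hm0)
      have step := setIntegral_mono_on hsubint ((integrableOn_const_iff enorm_ne_top).mpr
        (Or.inr (by rw [Real.volume_Ioc]; exact ENNReal.ofReal_lt_top)))
        measurableSet_Ioc hmid_pt
      rw [setIntegral_const, Real.volume_real_Ioc_of_le hms, smul_eq_mul] at step
      have hlen : s - m ≤ δ := by
        have := le_max_left (s - δ) 0; simp only [← hmdef] at this; linarith
      have hnn : 0 ≤ δ^(2*H-1) := Real.rpow_nonneg hδ.le _
      calc (∫ u in Set.Ioc m s, ((t - u) ^ (H - 1/2) - (s - u) ^ (H - 1/2)) ^ 2)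
          ≤ (s - m) * δ^(2*H-1) := step
        _ ≤ δ * δ^(2*H-1) := mul_le_mul_of_nonneg_right hlen hnn
        _ = δ^(2*H) := by
            rw [mul_comm, ← Real.rpow_add_one hδ.ne' (2*H-1)]; ring_nf
    -- tail piece
    have htail : (∫ u in Set.Ioc (0:ℝ) m, ((t - u) ^ (H - 1/2) - (s - u) ^ (H - 1/2)) ^ 2)
        ≤ δ^(2*H) / (2-2*H) := by
      by_cases hsm : s - δ ≤ 0
      · have : m = 0 := max_eq_right hsm
        rw [this]
        simp only [Set.Ioc_self, Measure.restrict_empty, integral_zero_measure]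
        positivity
      · push_neg at hsm
        have hmeq : m = s - δ := max_eq_left (by linarith)
        rw [hmeq]
        have hpt : ∀ u ∈ Set.Ioc (0:ℝ) (s - δ),
            ((t - u) ^ (H - 1/2) - (s - u) ^ (H - 1/2)) ^ 2
              ≤ (H - 1/2)^2 * δ^2 * (s - u) ^ (2*H-3) := by
          intro u hu
          have hb : δ ≤ s - u := by linarith [hu.2]
          have hbpos : 0 < s - u := lt_of_lt_of_le hδ hb
          have hB : (t - u) ^ (H - 1/2)
              ≤ (s - u) ^ (H - 1/2) + (H - 1/2) * δ * (s - u) ^ (H - 1/2 - 1) := by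
            have := rpowMVT (s - u) δ (H - 1/2) hbpos hδ.le hα.le hα1
            calc (t - u) ^ (H - 1/2) = ((s - u) + δ) ^ (H - 1/2) := by congr 1; linarith
              _ ≤ _ := this
          have hAB : (s - u) ^ (H - 1/2) ≤ (t - u) ^ (H - 1/2) :=
            Real.rpow_le_rpow hbpos.le (by linarith) hα.le
          have hsq : ((t - u) ^ (H - 1/2) - (s - u) ^ (H - 1/2)) ^ 2
              ≤ ((H - 1/2) * δ * (s - u) ^ (H - 1/2 - 1)) ^ 2 := by
            apply pow_le_pow_left₀ (sub_nonneg.mpr hAB) (by linarith)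
          have hexp : ((H - 1/2) * δ * (s - u) ^ (H - 1/2 - 1)) ^ 2
              = (H - 1/2)^2 * δ^2 * (s - u) ^ (2*H-3) := by
            rw [mul_pow, mul_pow, sq ((s-u) ^ (H - 1/2 - 1)), ← Real.rpow_add hbpos]
            ring_nf
          linarith
        have hg3 : IntegrableOn (fun u => (H - 1/2)^2 * δ^2 * (s - u) ^ (2*H-3))
            (Set.Ioc (0:ℝ) (s - δ)) := by
          apply Integrable.const_mul
          have : ContinuousOn (fun u => (s - u) ^ (2*H-3)) (Set.Icc 0 (s - δ)) := by
            apply (continuousOn_const.sub continuousOn_id).rpow_const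
            intro x hx
            refine Or.inl ?_
            simp only [Set.mem_Icc, id_eq, Pi.sub_apply] at hx ⊢
            intro h; nlinarith [hx.2]
          exact (this.integrableOn_Icc).mono_set Set.Ioc_subset_Icc_self
        have hsubint : IntegrableOn (fun u => ((t - u) ^ (H - 1/2) - (s - u) ^ (H - 1/2)) ^ 2)
            (Set.Ioc (0:ℝ) (s - δ)) := by
          rw [← hmeq]; exact hfint.mono_set (Set.Ioc_subset_Ioc_right hms)
        have step := setIntegral_mono_on hsubint hg3 measurableSet_Ioc hpt
        have ev3 : (∫ u in Set.Ioc (0:ℝ) (s - δ), (H - 1/2)^2 * δ^2 * (s - u) ^ (2*H-3))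
            = (H - 1/2)^2 * δ^2 * ((s^(2*H-2) - δ^(2*H-2))/(2*H-2)) := by
          rw [MeasureTheory.integral_const_mul,
            auxInt (2*H-3) s 0 (s - δ) (by linarith) (Or.inr ⟨by intro h; linarith [h], by linarith⟩),
            show 2*H-3+1 = 2*H-2 by ring, sub_zero, show s - (s - δ) = δ by ring]
        rw [ev3] at step
        have hfinal : (H - 1/2)^2 * δ^2 * ((s^(2*H-2) - δ^(2*H-2))/(2*H-2))
            ≤ δ^(2*H) / (2-2*H) := by
          have e4 : (s^(2*H-2) - δ^(2*H-2))/(2*H-2) = (δ^(2*H-2) - s^(2*H-2))/(2-2*H) := by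
            rw [div_eq_div_iff (by linarith) (by linarith)]; ring
          rw [e4]
          have hs2 : 0 ≤ s^(2*H-2) := Real.rpow_nonneg hs _
          have hα2 : (H - 1/2)^2 ≤ 1 := pow_le_one₀ hα.le (by linarith)
          have hδ2 : δ^2 * δ^(2*H-2) = δ^(2*H) := by
            rw [show (δ:ℝ)^2 = δ^(2:ℝ) by rw [← Real.rpow_natCast δ 2]; norm_num,
              ← Real.rpow_add hδ]; ring_nf
          have hδ2H2 : 0 ≤ δ^(2*H-2) := Real.rpow_nonneg hδ.le _
          rw [show (H - 1/2)^2 * δ^2 * ((δ^(2*H-2) - s^(2*H-2))/(2-2*H))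
              = ((H - 1/2)^2 * δ^2 * (δ^(2*H-2) - s^(2*H-2)))/(2-2*H) by ring,
            div_le_div_iff_of_pos_right h22H]
          have hbr : 0 ≤ δ^(2*H-2) - s^(2*H-2) :=
            sub_nonneg.mpr (Real.rpow_le_rpow_of_nonpos hδ (by linarith) (by linarith))
          have h1 : (H - 1/2)^2 * δ^2 * (δ^(2*H-2) - s^(2*H-2)) ≤ δ^2 * δ^(2*H-2) := by
            have t1 : (H - 1/2)^2 * δ^2 * (δ^(2*H-2) - s^(2*H-2))
                ≤ 1 * δ^2 * (δ^(2*H-2) - s^(2*H-2)) :=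
              mul_le_mul_of_nonneg_right
                (mul_le_mul_of_nonneg_right hα2 (sq_nonneg δ)) hbr
            have t2 : 0 ≤ δ^2 * s^(2*H-2) := mul_nonneg (sq_nonneg δ) hs2
            nlinarith [t1, t2]
          exact h1.trans hδ2.le
        linarith
    -- combine
    have hsplit : (∫ u in Set.Ioc (0:ℝ) s, ((t - u) ^ (H - 1/2) - (s - u) ^ (H - 1/2)) ^ 2)
        = (∫ u in Set.Ioc (0:ℝ) m, ((t - u) ^ (H - 1/2) - (s - u) ^ (H - 1/2)) ^ 2)
          + ∫ u in Set.Ioc m s, ((t - u) ^ (H - 1/2) - (s - u) ^ (H - 1/2)) ^ 2 := by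
      rw [← Set.Ioc_union_Ioc_eq_Ioc hm0 hms]
      exact setIntegral_union (Set.Ioc_disjoint_Ioc_of_le le_rfl) measurableSet_Ioc
        ((hfint.mono_set (Set.Ioc_subset_Ioc_right hms)))
        (hfint.mono_set (Set.Ioc_subset_Ioc_left hm0))
    rw [e2, hsplit, abs_of_nonneg hδ.le]
    have expand : (1/(2*H) + 1 + 1/(2-2*H)) * δ^(2*H)
        = δ^(2*H)/(2-2*H) + δ^(2*H) + δ^(2*H)/(2*H) := by field_simp; ring
    rw [expand]
    linarith
end

section
/- Let Y : [0,T] → ℝ be a continuous function satisfying φ(t) + δ ≤ Y(t) ≤ ψ(t) - δ for all t and some δ > 0, where φ < ψ are continuous. Suppose b : D → ℝ satisfies the local Lipschitz condition |b(t₁,y₁) - b(t₂,y₂)| ≤ (c₁/δ^p)(|y₁-y₂| + |t₁-t₂|^H) on the region D_{δ,δ} = {(t,y) : φ(t)+δ < y < ψ(t)-δ}, and Y(t) = Y(0) + ∫₀ᵗ b(s,Y(s))ds + Z(t) where |Z(t)-Z(s)| ≤ Λ|t-s|^λ for all s,t with 0 < λ ≤ min(H,1). Then there is a constant C (depending on T,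 c₁, δ, p, λ, sup ψ, Y(0), |b(0,Y(0))|) such that |Y(t) - Y(s)| ≤ (C(1+Λ))·|t-s|^λ for all s,t ∈ [0,T]. -/
open MeasureTheory Set

/-- Pathwise Hölder-continuity transfer for a sandwiched solution: a solution `Y` of
`Y(t) = Y(0) + ∫₀ᵗ b(s,Y(s)) ds + Z(t)` that stays in `[φ+δ, ψ-δ]`, with `b` locally
Lipschitz on that region and `Z` being `λ`-Hölder with seminorm `Λ`, is `λ`-Hölder
with seminorm at most `C (1 + Λ)`. -/
theorem stmt_5 (T H δ c₁ p lam Λ : ℝ)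
    (hT : 0 < T) (hH : 0 < H) (hδ : 0 < δ) (hc₁ : 0 < c₁) (hp : 1 < p)
    (hlam : 0 < lam) (hlam' : lam ≤ min H 1) (hΛ : 0 ≤ Λ)
    (φ ψ Y Z : ℝ → ℝ) (b : ℝ → ℝ → ℝ)
    (hφ : ContinuousOn φ (Set.Icc 0 T)) (hψ : ContinuousOn ψ (Set.Icc 0 T))
    (hφψ : ∀ t ∈ Set.Icc (0:ℝ) T, φ t < ψ t)
    (hYc : ContinuousOn Y (Set.Icc 0 T))
    (hsand : ∀ t ∈ Set.Icc (0:ℝ) T, φ t + δ ≤ Y t ∧ Y t ≤ ψ t - δ)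
    (hb : ∀ t₁ ∈ Set.Icc (0:ℝ) T, ∀ t₂ ∈ Set.Icc (0:ℝ) T, ∀ y₁ y₂ : ℝ,
      φ t₁ + δ ≤ y₁ → y₁ ≤ ψ t₁ - δ → φ t₂ + δ ≤ y₂ → y₂ ≤ ψ t₂ - δ →
      |b t₁ y₁ - b t₂ y₂| ≤ (c₁ / δ ^ p) * (|y₁ - y₂| + |t₁ - t₂| ^ H))
    (heq : ∀ t ∈ Set.Icc (0:ℝ) T,
      Y t = Y 0 + (∫ s in Set.Ioc (0:ℝ) t, b s (Y s)) + Z t)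
    (hZ : ∀ s ∈ Set.Icc (0:ℝ) T, ∀ t ∈ Set.Icc (0:ℝ) T, |Z t - Z s| ≤ Λ * |t - s| ^ lam) :
    ∃ C > (0:ℝ), ∀ s ∈ Set.Icc (0:ℝ) T, ∀ t ∈ Set.Icc (0:ℝ) T,
      |Y t - Y s| ≤ (C * (1 + Λ)) * |t - s| ^ lam := by
  set g : ℝ → ℝ := fun s => b s (Y s) with hg
  have hlam1 : lam ≤ 1 := hlam'.trans (min_le_right _ _)
  have hc : (0:ℝ) < c₁ / δ ^ p := div_pos hc₁ (Real.rpow_pos_of_pos hδ p)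
  -- Lipschitz-type estimate for g
  have hgest : ∀ t₁ ∈ Set.Icc (0:ℝ) T, ∀ t₂ ∈ Set.Icc (0:ℝ) T,
      |g t₁ - g t₂| ≤ (c₁ / δ ^ p) * (|Y t₁ - Y t₂| + |t₁ - t₂| ^ H) := by
    intro t₁ h₁ t₂ h₂
    exact hb t₁ h₁ t₂ h₂ (Y t₁) (Y t₂) (hsand t₁ h₁).1 (hsand t₁ h₁).2
      (hsand t₂ h₂).1 (hsand t₂ h₂).2
  -- continuity of g on [0,T]
  have hgc : ContinuousOn g (Set.Icc 0 T) := by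
    intro x hx
    rw [ContinuousWithinAt, tendsto_iff_dist_tendsto_zero]
    have hb0 : Filter.Tendsto (fun t => (c₁ / δ ^ p) * (|Y t - Y x| + |t - x| ^ H))
        (nhdsWithin x (Set.Icc 0 T)) (nhds 0) := by
      have h1 : Filter.Tendsto (fun t => |Y t - Y x|) (nhdsWithin x (Set.Icc 0 T)) (nhds 0) := by
        have := ((hYc x hx).sub (continuousWithinAt_const (b := Y x))).abs
        simpa [ContinuousWithinAt, sub_self] using this
      have h2 : Filter.Tendsto (fun t : ℝ => |t - x| ^ H) (nhdsWithin x (Set.Icc 0 T)) (nhds 0) := by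
        have hbase : Filter.Tendsto (fun t : ℝ => |t - x|) (nhdsWithin x (Set.Icc 0 T)) (nhds 0) := by
          have h3 : Filter.Tendsto (fun t : ℝ => t - x) (nhdsWithin x (Set.Icc 0 T)) (nhds 0) := by
            have := ((continuous_id.sub (continuous_const (y := x)))).continuousWithinAt
              (s := Set.Icc (0:ℝ) T) (x := x)
            simpa [ContinuousWithinAt, Pi.sub_def] using this
          simpa using h3.abs
        have hrpow : Filter.Tendsto (fun y : ℝ => y ^ H) (nhds 0) (nhds 0) := by
          have := (Real.continuousAt_rpow_const 0 H (Or.inr hH.le))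
          simpa [ContinuousAt, Real.zero_rpow hH.ne'] using this
        exact hrpow.comp hbase
      have := (h1.add h2).const_mul (c₁ / δ ^ p)
      simpa using this
    apply squeeze_zero' (Filter.Eventually.of_forall fun t => dist_nonneg) _ hb0
    filter_upwards [self_mem_nhdsWithin] with t ht
    simpa [Real.dist_eq] using hgest t ht x hx
  -- boundedness of g on [0,T]
  obtain ⟨M₀, hM₀⟩ := (isCompact_Icc (a := (0:ℝ)) (b := T)).exists_bound_of_continuousOn hgc
  set M : ℝ := max M₀ 0 with hM
  have hMnn : 0 ≤ M := le_max_right _ _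
  have hMb : ∀ t ∈ Set.Icc (0:ℝ) T, |g t| ≤ M := fun t ht =>
    le_trans (by simpa using hM₀ t ht) (le_max_left _ _)
  -- integrability
  have hgint : IntegrableOn g (Set.Icc 0 T) volume := hgc.integrableOn_Icc
  -- key one sided estimate
  set K : ℝ := max T 1 with hK
  have hK1 : (1:ℝ) ≤ K := le_max_right _ _
  have hrK : ∀ r : ℝ, 0 ≤ r → r ≤ T → r ≤ K * r ^ lam := by
    intro r hr hrT
    rcases eq_or_lt_of_le hr with h | h
    · simp [← h, Real.zero_rpow hlam.ne']
    · have : r = r ^ (1 - lam) * r ^ lam := by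
        rw [← Real.rpow_add h]; simp
      have hle : r ^ (1 - lam) ≤ K :=
        calc r ^ (1 - lam) ≤ K ^ (1 - lam) :=
              Real.rpow_le_rpow hr (hrT.trans (le_max_left _ _)) (by linarith)
          _ ≤ K ^ (1:ℝ) := Real.rpow_le_rpow_of_exponent_le hK1 (by linarith)
          _ = K := Real.rpow_one K
      calc r = r ^ (1 - lam) * r ^ lam := this
        _ ≤ K * r ^ lam := mul_le_mul_of_nonneg_right hle (Real.rpow_nonneg hr _)
  set C : ℝ := max (M * K) 1 with hC
  have hCpos : (0:ℝ) < C := lt_of_lt_of_le one_pos (le_max_right _ _)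
  refine ⟨C, hCpos, ?_⟩
  have key : ∀ s ∈ Set.Icc (0:ℝ) T, ∀ t ∈ Set.Icc (0:ℝ) T, s ≤ t →
      |Y t - Y s| ≤ (C * (1 + Λ)) * |t - s| ^ lam := by
    intro s hs t ht hst
    have hs0 : (0:ℝ) ≤ s := hs.1
    have htT : t ≤ T := ht.2
    -- split the integral
    have hsub1 : Set.Ioc (0:ℝ) s ⊆ Set.Icc 0 T := fun x hx => ⟨hx.1.le, hx.2.trans (hs.2)⟩
    have hsub2 : Set.Ioc s t ⊆ Set.Icc 0 T := fun x hx => ⟨hs0.trans hx.1.le, hx.2.trans htT⟩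
    have hi1 : IntegrableOn g (Set.Ioc 0 s) volume := hgint.mono_set hsub1
    have hi2 : IntegrableOn g (Set.Ioc s t) volume := hgint.mono_set hsub2
    have hsplit : (∫ u in Set.Ioc (0:ℝ) t, g u) =
        (∫ u in Set.Ioc (0:ℝ) s, g u) + ∫ u in Set.Ioc s t, g u := by
      rw [← setIntegral_union (Set.Ioc_disjoint_Ioc_of_le le_rfl) measurableSet_Ioc hi1 hi2,
        Set.Ioc_union_Ioc_eq_Ioc hs0 hst]
    have hYts : Y t - Y s = (∫ u in Set.Ioc s t, g u) + (Z t - Z s) := by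
      rw [heq t ht, heq s hs, hsplit]; ring
    have hintb : |∫ u in Set.Ioc s t, g u| ≤ M * (t - s) := by
      have := norm_setIntegral_le_of_norm_le_const (μ := volume) (s := Set.Ioc s t)
        (C := M) (f := g) (by simp [Real.volume_Ioc]) (fun x hx => by
          simpa using hMb x (hsub2 hx))
      simpa [Real.norm_eq_abs, Real.volume_real_Ioc_of_le hst, Real.volume_Ioc, ENNReal.toReal_ofReal (sub_nonneg.2 hst)] using this
    have hts : |t - s| = t - s := abs_of_nonneg (sub_nonneg.2 hst)
    calc |Y t - Y s| ≤ |∫ u in Set.Ioc s t, g u| + |Z t - Z s| := by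
          rw [hYts]; exact abs_add_le _ _
      _ ≤ M * (t - s) + Λ * |t - s| ^ lam := add_le_add hintb (hZ s hs t ht)
      _ ≤ M * (K * (t - s) ^ lam) + Λ * |t - s| ^ lam := by
          apply add_le_add_left
          apply mul_le_mul_of_nonneg_left _ hMnn
          exact hrK (t - s) (sub_nonneg.2 hst) (by linarith [hs.1, ht.2])
      _ = (M * K) * |t - s| ^ lam + Λ * |t - s| ^ lam := by rw [hts]; ring
      _ ≤ C * |t - s| ^ lam + (C * Λ) * |t - s| ^ lam := by
          apply add_le_add
          · exact mul_le_mul_of_nonneg_right (le_max_left _ _) (Real.rpow_nonneg (abs_nonneg _) _)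
          · apply mul_le_mul_of_nonneg_right _ (Real.rpow_nonneg (abs_nonneg _) _)
            nlinarith [le_max_right (M*K) (1:ℝ)]
      _ = (C * (1 + Λ)) * |t - s| ^ lam := by ring
  intro s hs t ht
  rcases le_total s t with h | h
  · exact key s hs t ht h
  · have := key t ht s hs h
    rwa [abs_sub_comm (Y s) (Y t), abs_sub_comm s t] at this
end

section
/- Let f : [0,T] → ℝ be H-Hölder continuous with constant C_H, i.e. |f(t)-f(s)| ≤ C_H|t-s|^H for all s,t ∈ [0,T] and some H ∈ (0,1]. Let B_m f denote the Bernstein polynomial of order m on [0,T]: (B_m f)(t) = ∑_{i=0}^m f(Ti/m)·binom(m,i)·(t/T)^i·(1-t/T)^{m-i}. Then B_m f is also H-Hölder continuous with the same constant C_H: |(B_m f)(t) - (B_m f)(s)| ≤ C_H|t-s|^H for all s,t ∈ [0,T]. -/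
open Finset

private lemma choose_id (m j k : ℕ) :
    (m.choose (j + k)) * ((j + k).choose j) = m.choose j * (m - j).choose k := by
  rcases le_or_gt (j + k) m with h | h
  · have := Nat.choose_mul (n := m) (Nat.le_add_right j k)
    simpa using this
  · rcases le_or_gt j m with hj | hj
    · rw [Nat.choose_eq_zero_of_lt h, Nat.choose_eq_zero_of_lt (show m - j < k by omega)]
      ring
    · rw [Nat.choose_eq_zero_of_lt (by omega), Nat.choose_eq_zero_of_lt hj]
      ring

private lemma sum_shift (m j : ℕ) (F : ℕ → ℝ) (h1 : ∀ i, m < i → F i = 0)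
    (h2 : ∀ i, i < j → F i = 0) :
    ∑ i ∈ range (m + 1), F i = ∑ k ∈ range (m + 1), F (j + k) := by
  have e1 : ∑ i ∈ range (m + 1), F i = ∑ i ∈ range (j + (m + 1)), F i := by
    apply Finset.sum_subset (Finset.range_subset_range.2 (by omega))
    intro x _ hx2
    exact h1 x (by simp only [Finset.mem_range] at hx2; omega)
  rw [e1, Finset.sum_range_add]
  rw [Finset.sum_eq_zero (fun i hi => h2 i (Finset.mem_range.mp hi)), zero_add]

private lemma expandA (m : ℕ) (g : ℕ → ℝ) (x y z : ℝ) :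
    ∑ i ∈ range (m + 1), g i * (m.choose i : ℝ) * (x + y) ^ i * z ^ (m - i)
    = ∑ j ∈ range (m + 1), ∑ k ∈ range (m + 1),
        g (j + k) * ((m.choose (j + k) : ℝ) * ((j + k).choose j : ℝ))
          * x ^ j * y ^ k * z ^ (m - (j + k)) := by
  have step1 : ∀ i ∈ range (m + 1),
      g i * (m.choose i : ℝ) * (x + y) ^ i * z ^ (m - i)
      = ∑ j ∈ range (m + 1),
          g i * ((m.choose i : ℝ) * (i.choose j : ℝ)) * x ^ j * y ^ (i - j) * z ^ (m - i) := by
    intro i hi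
    rw [add_pow]
    have e : ∑ j ∈ range (i + 1), x ^ j * y ^ (i - j) * (i.choose j : ℝ)
        = ∑ j ∈ range (m + 1), x ^ j * y ^ (i - j) * (i.choose j : ℝ) := by
      apply Finset.sum_subset (Finset.range_subset_range.2 (by simp only [Finset.mem_range] at hi; omega))
      intro j _ hj
      simp only [Finset.mem_range] at hj
      rw [Nat.choose_eq_zero_of_lt (by omega)]
      simp
    calc g i * (m.choose i : ℝ) *
          (∑ j ∈ range (i + 1), x ^ j * y ^ (i - j) * (i.choose j : ℝ)) * z ^ (m - i)
        = ∑ j ∈ range (m + 1),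
            g i * (m.choose i : ℝ) * (x ^ j * y ^ (i - j) * (i.choose j : ℝ)) * z ^ (m - i) := by
          rw [e, Finset.mul_sum, Finset.sum_mul]
      _ = _ := Finset.sum_congr rfl (fun j _ => by ring)
  rw [Finset.sum_congr rfl step1, Finset.sum_comm]
  apply Finset.sum_congr rfl
  intro j hj
  have hs := sum_shift m j
    (fun i => g i * ((m.choose i : ℝ) * (i.choose j : ℝ)) * x ^ j * y ^ (i - j) * z ^ (m - i))
    (fun i hi => by rw [Nat.choose_eq_zero_of_lt hi]; simp)
    (fun i hi => by rw [Nat.choose_eq_zero_of_lt (show i < j from hi)]; simp)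
  rw [hs]
  apply Finset.sum_congr rfl
  intro k _
  rw [show j + k - j = k from by omega]

private lemma expandB (m : ℕ) (g : ℕ → ℝ) (x y z : ℝ) :
    ∑ j ∈ range (m + 1), g j * (m.choose j : ℝ) * x ^ j * (y + z) ^ (m - j)
    = ∑ j ∈ range (m + 1), ∑ k ∈ range (m + 1),
        g j * ((m.choose (j + k) : ℝ) * ((j + k).choose j : ℝ))
          * x ^ j * y ^ k * z ^ (m - (j + k)) := by
  apply Finset.sum_congr rfl
  intro j hj
  simp only [Finset.mem_range] at hj
  rw [add_pow, Finset.mul_sum]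
  have ext1 : ∑ k ∈ range (m - j + 1), g j * (m.choose j : ℝ) * x ^ j *
        (y ^ k * z ^ (m - j - k) * ((m - j).choose k : ℝ))
      = ∑ k ∈ range (m + 1), g j * (m.choose j : ℝ) * x ^ j *
        (y ^ k * z ^ (m - j - k) * ((m - j).choose k : ℝ)) := by
    apply Finset.sum_subset (Finset.range_subset_range.2 (show m - j + 1 ≤ m + 1 by omega))
    intro k _ hk
    simp only [Finset.mem_range] at hk
    rw [Nat.choose_eq_zero_of_lt (show m - j < k by omega)]
    simp
  rw [ext1]
  apply Finset.sum_congr rfl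
  intro k _
  have hc : ((m.choose (j + k) : ℝ) * ((j + k).choose j : ℝ))
      = (m.choose j : ℝ) * ((m - j).choose k : ℝ) := by
    rw [← Nat.cast_mul, ← Nat.cast_mul, choose_id]
  rw [hc]
  have hsub : m - j - k = m - (j + k) := by omega
  rw [hsub]
  ring

private lemma bern_mean (n : ℕ) (a b : ℝ) :
    ∑ i ∈ range (n + 1), (i : ℝ) * (n.choose i : ℝ) * a ^ i * b ^ (n - i)
      = n * a * (a + b) ^ (n - 1) := by
  induction n with
  | zero => simp
  | succ p _ =>
    rw [Finset.sum_range_succ']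
    simp only [Nat.cast_zero, zero_mul, add_zero]
    have hkey : ∀ i : ℕ, ((i + 1 : ℕ) : ℝ) * ((p + 1).choose (i + 1) : ℝ)
        = ((p : ℝ) + 1) * (p.choose i : ℝ) := by
      intro i
      have h1 : (p + 1) * p.choose i = (p + 1).choose (i + 1) * (i + 1) :=
        Nat.add_one_mul_choose_eq p i
      have h2 : ((p : ℝ) + 1) * (p.choose i : ℝ)
          = ((p + 1).choose (i + 1) : ℝ) * ((i : ℝ) + 1) := by exact_mod_cast h1
      push_cast
      linarith [h2]
    have e : ∑ i ∈ range (p + 1),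
        ((i + 1 : ℕ) : ℝ) * ((p + 1).choose (i + 1) : ℝ) * a ^ (i + 1) * b ^ (p + 1 - (i + 1))
        = ((p : ℝ) + 1) * a * ∑ i ∈ range (p + 1),
            (p.choose i : ℝ) * a ^ i * b ^ (p - i) := by
      rw [Finset.mul_sum]
      apply Finset.sum_congr rfl
      intro i _
      rw [show p + 1 - (i + 1) = p - i from by omega, hkey i]
      ring
    rw [e]
    have hbin : ∑ i ∈ range (p + 1), (p.choose i : ℝ) * a ^ i * b ^ (p - i) = (a + b) ^ p := by
      rw [add_pow]
      exact Finset.sum_congr rfl (fun i _ => by ring)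
    rw [hbin]
    simp only [Nat.add_sub_cancel]
    push_cast
    ring

set_option maxHeartbeats 1600000 in
/-- Bernstein polynomials on `[0,T]` preserve `H`-Hölder continuity with the same
Hölder constant. -/
theorem stmt_13 (T H C : ℝ) (hT : 0 < T) (hH : H ∈ Set.Ioc (0:ℝ) 1) (hC : 0 ≤ C)
    (f : ℝ → ℝ)
    (hf : ∀ s ∈ Set.Icc (0:ℝ) T, ∀ t ∈ Set.Icc (0:ℝ) T, |f t - f s| ≤ C * |t - s| ^ H)
    (m : ℕ) (hm : 1 ≤ m) :
    ∀ s ∈ Set.Icc (0:ℝ) T, ∀ t ∈ Set.Icc (0:ℝ) T,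
      |(∑ i ∈ Finset.range (m + 1),
          f (T * i / m) * (m.choose i : ℝ) * (t / T) ^ i * (1 - t / T) ^ (m - i))
        - (∑ i ∈ Finset.range (m + 1),
          f (T * i / m) * (m.choose i : ℝ) * (s / T) ^ i * (1 - s / T) ^ (m - i))|
        ≤ C * |t - s| ^ H := by
  suffices key : ∀ s ∈ Set.Icc (0:ℝ) T, ∀ t ∈ Set.Icc (0:ℝ) T, s ≤ t →
      |(∑ i ∈ Finset.range (m + 1),
          f (T * i / m) * (m.choose i : ℝ) * (t / T) ^ i * (1 - t / T) ^ (m - i))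
        - (∑ i ∈ Finset.range (m + 1),
          f (T * i / m) * (m.choose i : ℝ) * (s / T) ^ i * (1 - s / T) ^ (m - i))|
        ≤ C * |t - s| ^ H by
    intro s hs t ht
    rcases le_total s t with hle | hle
    · exact key s hs t ht hle
    · rw [abs_sub_comm, abs_sub_comm t s]
      exact key t ht s hs hle
  intro s hs t ht hst
  obtain ⟨hH0, hH1⟩ := hH
  have hm0 : (0:ℝ) < (m:ℝ) := by exact_mod_cast Nat.lt_of_lt_of_le Nat.zero_lt_one hm
  set u := s / T with hu
  set v := t / T with hv
  set h := v - u with hh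
  have hu0 : 0 ≤ u := div_nonneg hs.1 hT.le
  have huv : u ≤ v := by rw [hu, hv]; gcongr
  have hh0 : 0 ≤ h := by rw [hh]; linarith
  have hv1 : v ≤ 1 := by rw [hv, div_le_one hT]; exact ht.2
  have h1v : 0 ≤ 1 - v := by linarith
  have huhv : u + h = v := by rw [hh]; ring
  have hhz : h + (1 - v) = 1 - u := by rw [hh]; ring
  have hTh : T * h = t - s := by
    rw [hh, hv, hu]
    field_simp
  set W : ℕ → ℕ → ℝ := fun j k =>
    ((m.choose (j + k) : ℝ) * ((j + k).choose j : ℝ)) * u ^ j * h ^ k * (1 - v) ^ (m - (j + k))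
    with hW
  have hW0 : ∀ j k, 0 ≤ W j k := by
    intro j k
    rw [hW]
    have := pow_nonneg hu0 j
    have := pow_nonneg hh0 k
    have := pow_nonneg h1v (m - (j + k))
    positivity
  -- expansion of the Bernstein sum at t
  have eV : (∑ i ∈ Finset.range (m + 1),
        f (T * i / m) * (m.choose i : ℝ) * v ^ i * (1 - v) ^ (m - i))
      = ∑ j ∈ range (m + 1), ∑ k ∈ range (m + 1), f (T * (j + k) / m) * W j k := by
    have h1 := expandA m (fun i => f (T * i / m)) u h (1 - v)
    rw [huhv] at h1
    rw [h1]
    exact Finset.sum_congr rfl (fun j _ => Finset.sum_congr rfl (fun k _ => by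
      simp only [hW]; push_cast; ring))
  -- expansion of the Bernstein sum at s
  have eU : (∑ i ∈ Finset.range (m + 1),
        f (T * i / m) * (m.choose i : ℝ) * u ^ i * (1 - u) ^ (m - i))
      = ∑ j ∈ range (m + 1), ∑ k ∈ range (m + 1), f (T * j / m) * W j k := by
    have h1 : (∑ i ∈ Finset.range (m + 1),
        f (T * i / m) * (m.choose i : ℝ) * u ^ i * (h + (1 - v)) ^ (m - i))
        = ∑ j ∈ range (m + 1), ∑ k ∈ range (m + 1),
          f (T * j / m) * ((m.choose (j + k) : ℝ) * ((j + k).choose j : ℝ))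
            * u ^ j * h ^ k * (1 - v) ^ (m - (j + k)) :=
      expandB m (fun i => f (T * i / m)) u h (1 - v)
    rw [hhz] at h1
    rw [h1]
    exact Finset.sum_congr rfl (fun j _ => Finset.sum_congr rfl (fun k _ => by
      rw [hW]; ring))
  -- weights sum to one
  have hS1 : ∑ j ∈ range (m + 1), ∑ k ∈ range (m + 1), W j k = 1 := by
    have h1 := expandA m (fun _ => (1:ℝ)) u h (1 - v)
    rw [huhv] at h1
    have h2 : ∑ j ∈ range (m + 1), ∑ k ∈ range (m + 1), W j k
        = ∑ i ∈ range (m + 1), (fun _ => (1:ℝ)) i * (m.choose i : ℝ) * v ^ i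
            * (1 - v) ^ (m - i) := by
      rw [h1]
      exact Finset.sum_congr rfl (fun j _ => Finset.sum_congr rfl (fun k _ => by
        simp only [hW]; ring))
    rw [h2]
    have h3 : ∑ i ∈ range (m + 1), (fun _ => (1:ℝ)) i * (m.choose i : ℝ) * v ^ i
          * (1 - v) ^ (m - i)
        = ∑ i ∈ range (m + 1), v ^ i * (1 - v) ^ (m - i) * (m.choose i : ℝ) :=
      Finset.sum_congr rfl (fun i _ => by dsimp only; ring)
    rw [h3, ← add_pow]
    norm_num
  -- first moment identities
  have hS2 : ∑ j ∈ range (m + 1), ∑ k ∈ range (m + 1), ((j : ℝ) + (k : ℝ)) * W j k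
      = m * v := by
    have h1 := expandA m (fun i => (i : ℝ)) u h (1 - v)
    rw [huhv] at h1
    have h2 : ∑ j ∈ range (m + 1), ∑ k ∈ range (m + 1), ((j : ℝ) + (k : ℝ)) * W j k
        = ∑ i ∈ range (m + 1), (i : ℝ) * (m.choose i : ℝ) * v ^ i * (1 - v) ^ (m - i) := by
      rw [h1]
      exact Finset.sum_congr rfl (fun j _ => Finset.sum_congr rfl (fun k _ => by
        simp only [hW]; push_cast; ring))
    rw [h2, bern_mean]
    rw [show v + (1 - v) = 1 from by ring, one_pow, mul_one]
  have hS3 : ∑ j ∈ range (m + 1), ∑ k ∈ range (m + 1), (j : ℝ) * W j k = m * u := by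
    have h1 : (∑ i ∈ Finset.range (m + 1),
        (i : ℝ) * (m.choose i : ℝ) * u ^ i * (h + (1 - v)) ^ (m - i))
        = ∑ j ∈ range (m + 1), ∑ k ∈ range (m + 1),
          (j : ℝ) * ((m.choose (j + k) : ℝ) * ((j + k).choose j : ℝ))
            * u ^ j * h ^ k * (1 - v) ^ (m - (j + k)) :=
      expandB m (fun i => (i : ℝ)) u h (1 - v)
    rw [hhz] at h1
    have h2 : ∑ j ∈ range (m + 1), ∑ k ∈ range (m + 1), (j : ℝ) * W j k
        = ∑ i ∈ range (m + 1), (i : ℝ) * (m.choose i : ℝ) * u ^ i * (1 - u) ^ (m - i) := by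
      rw [h1]
      exact Finset.sum_congr rfl (fun j _ => Finset.sum_congr rfl (fun k _ => by
        rw [hW]; ring))
    rw [h2, bern_mean]
    rw [show u + (1 - u) = 1 from by ring, one_pow, mul_one]
  have hS4 : ∑ j ∈ range (m + 1), ∑ k ∈ range (m + 1), (k : ℝ) * W j k = m * h := by
    have hsplit : ∑ j ∈ range (m + 1), ∑ k ∈ range (m + 1), ((j : ℝ) + (k : ℝ)) * W j k
        = (∑ j ∈ range (m + 1), ∑ k ∈ range (m + 1), (j : ℝ) * W j k)
          + ∑ j ∈ range (m + 1), ∑ k ∈ range (m + 1), (k : ℝ) * W j k := by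
      rw [← Finset.sum_add_distrib]
      exact Finset.sum_congr rfl (fun j _ => by
        rw [← Finset.sum_add_distrib]
        exact Finset.sum_congr rfl (fun k _ => by ring))
    rw [hsplit, hS3] at hS2
    have : (m : ℝ) * v = m * u + m * h := by rw [hh]; ring
    linarith
  -- Jensen's inequality for x ↦ x ^ H
  have hcc : ConcaveOn ℝ (Set.Ici 0) (fun x : ℝ => x ^ H) := Real.concaveOn_rpow hH0.le hH1
  have hJ := hcc.le_map_sum (t := (range (m + 1)) ×ˢ (range (m + 1)))
      (w := fun p : ℕ × ℕ => W p.1 p.2) (p := fun p : ℕ × ℕ => (p.2 : ℝ) / m)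
      (fun p _ => hW0 p.1 p.2)
      (by rw [Finset.sum_product]; exact hS1)
      (fun p _ => Set.mem_Ici.2 (by positivity))
  simp only [Finset.sum_product, smul_eq_mul] at hJ
  have hmean : ∑ j ∈ range (m + 1), ∑ k ∈ range (m + 1), W j k * ((k : ℝ) / m) = h := by
    have e1 : ∀ j ∈ range (m + 1),
        ∑ k ∈ range (m + 1), W j k * ((k : ℝ) / m)
        = (∑ k ∈ range (m + 1), (k : ℝ) * W j k) / m := by
      intro j _
      rw [Finset.sum_div]
      exact Finset.sum_congr rfl (fun k _ => by ring)
    rw [Finset.sum_congr rfl e1, ← Finset.sum_div, hS4]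
    field_simp
  have hJ2 : ∑ j ∈ range (m + 1), ∑ k ∈ range (m + 1), W j k * ((k : ℝ) / m) ^ H
      ≤ h ^ H := by
    calc ∑ j ∈ range (m + 1), ∑ k ∈ range (m + 1), W j k * ((k : ℝ) / m) ^ H
        ≤ (∑ j ∈ range (m + 1), ∑ k ∈ range (m + 1), W j k * ((k : ℝ) / m)) ^ H := hJ
      _ = h ^ H := by rw [hmean]
  -- pointwise Hölder bound
  have ePT : ∀ j ∈ range (m + 1), ∀ k ∈ range (m + 1),
      |(f (T * (j + k) / m) - f (T * j / m)) * W j k|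
        ≤ (C * T ^ H) * (W j k * ((k : ℝ) / m) ^ H) := by
    intro j hj k hk
    rcases le_or_gt (j + k) m with hjk | hjk
    · have hxmem : T * j / m ∈ Set.Icc (0:ℝ) T := by
        constructor
        · positivity
        · rw [div_le_iff₀ hm0]
          have : (j : ℝ) ≤ (m : ℝ) := by exact_mod_cast (by omega : j ≤ m)
          nlinarith
      have hymem : T * (j + k) / m ∈ Set.Icc (0:ℝ) T := by
        constructor
        · positivity
        · rw [div_le_iff₀ hm0]
          have : ((j : ℝ) + (k : ℝ)) ≤ (m : ℝ) := by exact_mod_cast (by omega : j + k ≤ m)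
          push_cast
          nlinarith
      have hb := hf (T * j / m) hxmem (T * (j + k) / m) hymem
      have harg : T * ((j : ℝ) + (k : ℝ)) / m - T * j / m = T * ((k : ℝ) / m) := by
        field_simp
        ring
      have hb2 : |f (T * (j + k) / m) - f (T * j / m)| ≤ (C * T ^ H) * ((k : ℝ) / m) ^ H := by
        calc |f (T * (j + k) / m) - f (T * j / m)|
            ≤ C * |T * ((j : ℝ) + (k : ℝ)) / m - T * j / m| ^ H := by
              push_cast at hb ⊢; exact hb
          _ = (C * T ^ H) * ((k : ℝ) / m) ^ H := by
              rw [harg, abs_of_nonneg (by positivity),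
                Real.mul_rpow hT.le (by positivity)]
              ring
      rw [abs_mul, abs_of_nonneg (hW0 j k)]
      calc |f (T * (j + k) / m) - f (T * j / m)| * W j k
          ≤ ((C * T ^ H) * ((k : ℝ) / m) ^ H) * W j k :=
            mul_le_mul_of_nonneg_right hb2 (hW0 j k)
        _ = (C * T ^ H) * (W j k * ((k : ℝ) / m) ^ H) := by ring
    · have hWz : W j k = 0 := by
        simp only [hW]
        rw [Nat.choose_eq_zero_of_lt hjk]
        simp
      rw [hWz]
      simp
  -- put everything together
  have hCT : 0 ≤ C * T ^ H := by positivity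
  calc |(∑ i ∈ Finset.range (m + 1),
          f (T * i / m) * (m.choose i : ℝ) * v ^ i * (1 - v) ^ (m - i))
        - ∑ i ∈ Finset.range (m + 1),
          f (T * i / m) * (m.choose i : ℝ) * u ^ i * (1 - u) ^ (m - i)|
      = |∑ j ∈ range (m + 1), ∑ k ∈ range (m + 1),
          (f (T * (j + k) / m) - f (T * j / m)) * W j k| := by
        rw [eV, eU, ← Finset.sum_sub_distrib]
        congr 1
        exact Finset.sum_congr rfl (fun j _ => by
          rw [← Finset.sum_sub_distrib]
          exact Finset.sum_congr rfl (fun k _ => by ring))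
    _ ≤ ∑ j ∈ range (m + 1), ∑ k ∈ range (m + 1),
          |(f (T * (j + k) / m) - f (T * j / m)) * W j k| := by
        refine (Finset.abs_sum_le_sum_abs _ _).trans (Finset.sum_le_sum fun j _ => ?_)
        exact Finset.abs_sum_le_sum_abs _ _
    _ ≤ ∑ j ∈ range (m + 1), ∑ k ∈ range (m + 1),
          (C * T ^ H) * (W j k * ((k : ℝ) / m) ^ H) := by
        refine Finset.sum_le_sum fun j hj => Finset.sum_le_sum fun k hk => ?_
        exact ePT j hj k hk
    _ = (C * T ^ H) * ∑ j ∈ range (m + 1), ∑ k ∈ range (m + 1),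
          W j k * ((k : ℝ) / m) ^ H := by
        rw [Finset.mul_sum]
        exact Finset.sum_congr rfl (fun j _ => by rw [Finset.mul_sum])
    _ ≤ (C * T ^ H) * h ^ H := mul_le_mul_of_nonneg_left hJ2 hCT
    _ = C * |t - s| ^ H := by
        rw [show |t - s| = T * h from by rw [hTh]; exact abs_of_nonneg (by linarith),
          Real.mul_rpow hT.le hh0]
        ring
end
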